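/- arXiv:2209.10105 — 5 statements merged into one kernel-verified Lean document; each statement's English description precedes it below -/
import Mathlib

section
/- Let K ≥ 1, let Π be an N×N symmetric doubly stochastic matrix with second-largest eigenvalue modulus λ < 1, and suppose the sequence x_{k+1} = Πx_k − α_k g_k in ℝ^N satisfies ‖g_k‖ ≤ G for all k, with x_1 having equal coordinates. Let x̂_k = (1/N)11ᵀx_k denote the coordinate-average vector. Then for all k ≥ 1, ‖x_k − x̂_k‖ ≤ G ∑_{s=1}^{k-1} α_s λ^{k-1-s}. -/
open Matrix in
lemma contraction (N : ℕ) (P : Matrix (Fin N) (Fin N) ℝ) (hsymm : P.IsSymm)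
    (hcol : ∀ j, ∑ i, P i j = 1)
    (lam : ℝ) (hlam0 : 0 ≤ lam)
    (heig : ∀ (μ : ℝ) (v : Fin N → ℝ), v ≠ 0 → P.mulVec v = μ • v →
      (∑ i, v i) = 0 → |μ| ≤ lam) :
    ∀ v : EuclideanSpace ℝ (Fin N), (∑ i, v i) = 0 →
      ‖Matrix.toEuclideanLin P v‖ ≤ lam * ‖v‖ := by
  classical
  set E := EuclideanSpace ℝ (Fin N)
  -- the sum functional
  let l : E →ₗ[ℝ] ℝ :=
    { toFun := fun v => ∑ i, v i
      map_add' := by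
        intro a b
        show ∑ i, (a i + b i) = _
        simp [Finset.sum_add_distrib]
      map_smul' := by
        intro c a
        show ∑ i, c * a i = _
        simp [Finset.mul_sum] }
  set S : Submodule ℝ E := LinearMap.ker l with hS
  have hherm : P.IsHermitian := by
    rwa [Matrix.IsHermitian, Matrix.conjTranspose_eq_transpose_of_trivial]
  have hPsymm : (Matrix.toEuclideanLin P).IsSymmetric :=
    Matrix.isHermitian_iff_isSymmetric.mp hherm
  have hsum : ∀ v : E, ∑ i, (Matrix.toEuclideanLin P v) i = ∑ i, v i := by
    intro v
    have : ∀ i, (Matrix.toEuclideanLin P v) i = ∑ j, P i j * v j := by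
      intro i
      rw [Matrix.toEuclideanLin_apply]
      rfl
    simp only [this]
    rw [Finset.sum_comm]
    congr 1; ext j
    rw [← Finset.sum_mul, hcol j, one_mul]
  have hinv : ∀ v ∈ S, Matrix.toEuclideanLin P v ∈ S := by
    intro v hv
    simp only [hS, LinearMap.mem_ker] at hv ⊢
    show ∑ i, (Matrix.toEuclideanLin P v) i = 0
    rw [hsum]; exact hv
  let T : S →ₗ[ℝ] S := (Matrix.toEuclideanLin P).restrict hinv
  have hT : T.IsSymmetric := by
    intro u w
    have := hPsymm (u : E) (w : E)
    show (inner ℝ ((T u : S) : E) ((w : S) : E) : ℝ) = inner ℝ ((u : S) : E) ((T w : S) : E)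
    rw [show ((T u : S) : E) = Matrix.toEuclideanLin P (u : E) from rfl,
        show ((T w : S) : E) = Matrix.toEuclideanLin P (w : E) from rfl]
    exact this
  -- eigenvalue bound on the restricted operator
  have hdim : Module.finrank ℝ S = Module.finrank ℝ S := rfl
  set n := Module.finrank ℝ S
  let b := hT.eigenvectorBasis hdim
  let μ := hT.eigenvalues hdim
  have hμ : ∀ i, |μ i| ≤ lam := by
    intro i
    have hev := hT.apply_eigenvectorBasis hdim i
    have hne : ((b i : S) : E) ≠ 0 := by
      intro h
      have : (b i : S) = 0 := Subtype.ext h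
      exact (b.toBasis.ne_zero i) (by simpa using this)
    have hmem : (∑ j, ((b i : S) : E) j) = 0 := (b i).2
    have happ : P.mulVec (((b i : S) : E) : Fin N → ℝ) = μ i • (((b i : S) : E) : Fin N → ℝ) := by
      have h2 : Matrix.toEuclideanLin P ((b i : S) : E) = μ i • ((b i : S) : E) :=
        congrArg Subtype.val hev
      rw [Matrix.toEuclideanLin_apply] at h2
      exact congrArg (WithLp.equiv 2 (Fin N → ℝ)) h2
    exact heig (μ i) _ (by simpa using hne) happ hmem
  -- norm bound for T
  have hTnorm : ∀ w : S, ‖T w‖ ≤ lam * ‖w‖ := by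
    intro w
    have hrep : ∀ i, b.repr (T w) i = μ i * b.repr w i := by
      intro i
      rw [b.repr_apply_apply, b.repr_apply_apply]
      have : (inner ℝ (b i) (T w) : ℝ) = inner ℝ (T (b i)) w := (hT (b i) w).symm
      rw [this, hT.apply_eigenvectorBasis hdim i]
      simp [real_inner_smul_left]
      rfl
    have h1 : ‖T w‖ = ‖b.repr (T w)‖ := (b.repr.norm_map _).symm
    have h2 : ‖w‖ = ‖b.repr w‖ := (b.repr.norm_map _).symm
    rw [h1, h2, EuclideanSpace.norm_eq, EuclideanSpace.norm_eq]
    rw [← Real.sqrt_sq hlam0, ← Real.sqrt_mul (sq_nonneg lam)]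
    apply Real.sqrt_le_sqrt
    rw [Finset.mul_sum]
    apply Finset.sum_le_sum
    intro i _
    rw [hrep i]
    have : ‖μ i * b.repr w i‖ ^ 2 = (μ i)^2 * ‖b.repr w i‖^2 := by
      rw [norm_mul, mul_pow]; congr 1; rw [Real.norm_eq_abs, sq_abs]
    rw [this]
    apply mul_le_mul_of_nonneg_right _ (by positivity)
    calc (μ i)^2 = |μ i|^2 := (sq_abs _).symm
      _ ≤ lam^2 := by
          apply pow_le_pow_left₀ (abs_nonneg _) (hμ i)
  intro v hv
  have hvS : v ∈ S := by rw [hS, LinearMap.mem_ker]; exact hv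
  have := hTnorm ⟨v, hvS⟩
  have hcoe : ‖T ⟨v, hvS⟩‖ = ‖Matrix.toEuclideanLin P v‖ := rfl
  have hcoe2 : ‖(⟨v, hvS⟩ : S)‖ = ‖v‖ := rfl
  rwa [hcoe, hcoe2] at this

noncomputable def avgE (N : ℕ) (v : EuclideanSpace ℝ (Fin N)) : EuclideanSpace ℝ (Fin N) :=
  (WithLp.equiv 2 (Fin N → ℝ)).symm fun _ => (∑ j, v j) / N

lemma avgE_apply (N : ℕ) (v : EuclideanSpace ℝ (Fin N)) (i : Fin N) :
    avgE N v i = (∑ j, v j) / N := rfl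

lemma sum_avgE (N : ℕ) (hN : 0 < N) (v : EuclideanSpace ℝ (Fin N)) :
    ∑ i, avgE N v i = ∑ i, v i := by
  simp only [avgE_apply, Finset.sum_const, Finset.card_univ, Fintype.card_fin, nsmul_eq_mul]
  field_simp

lemma avgE_sub_smul (N : ℕ) (u w : EuclideanSpace ℝ (Fin N)) (c : ℝ) :
    avgE N (u - c • w) = avgE N u - c • avgE N w := by
  ext i
  simp only [PiLp.sub_apply, PiLp.smul_apply, avgE_apply, smul_eq_mul]
  rw [Finset.sum_sub_distrib, ← Finset.mul_sum]
  ring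

lemma norm_sub_avgE (N : ℕ) (hN : 0 < N) (v : EuclideanSpace ℝ (Fin N)) :
    ‖v - avgE N v‖ ≤ ‖v‖ := by
  rw [EuclideanSpace.norm_eq, EuclideanSpace.norm_eq]
  apply Real.sqrt_le_sqrt
  set m : ℝ := (∑ j, v j) / N with hm
  have hsm : ∑ j, v j = N * m := by
    rw [hm]; field_simp
  have : ∀ i, ‖(v - avgE N v) i‖ ^ 2 = v i ^ 2 - 2 * m * v i + m ^ 2 := by
    intro i
    simp only [PiLp.sub_apply, avgE_apply, ← hm, Real.norm_eq_abs, sq_abs]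
    ring
  simp only [Real.norm_eq_abs, sq_abs] at this ⊢
  calc ∑ i, (v - avgE N v) i ^ 2 = ∑ i, (v i ^ 2 - 2 * m * v i + m ^ 2) :=
        Finset.sum_congr rfl fun i _ => this i
    _ ≤ ∑ i, v i ^ 2 := ?_
  rw [Finset.sum_add_distrib, Finset.sum_sub_distrib, ← Finset.mul_sum, hsm]
  simp only [Finset.sum_const, Finset.card_univ, Fintype.card_fin, nsmul_eq_mul]
  have hNpos : (0:ℝ) < N := Nat.cast_pos.mpr hN
  nlinarith [sq_nonneg m]

lemma toEuclideanLin_avgE (N : ℕ) (P : Matrix (Fin N) (Fin N) ℝ)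
    (hrow : ∀ i, ∑ j, P i j = 1) (v : EuclideanSpace ℝ (Fin N)) :
    Matrix.toEuclideanLin P (avgE N v) = avgE N v := by
  ext i
  have : (Matrix.toEuclideanLin P (avgE N v)) i = ∑ j, P i j * avgE N v j := by
    rw [Matrix.toEuclideanLin_apply]; rfl
  rw [this]
  simp only [avgE_apply, ← Finset.sum_mul, hrow i, one_mul]
lemma sum_toEuclideanLin (N : ℕ) (P : Matrix (Fin N) (Fin N) ℝ)
    (hcol : ∀ j, ∑ i, P i j = 1) (v : EuclideanSpace ℝ (Fin N)) :
    ∑ i, (Matrix.toEuclideanLin P v) i = ∑ i, v i := by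
  have : ∀ i, (Matrix.toEuclideanLin P v) i = ∑ j, P i j * v j := by
    intro i; rw [Matrix.toEuclideanLin_apply]; rfl
  simp only [this]
  rw [Finset.sum_comm]
  congr 1; ext j
  rw [← Finset.sum_mul, hcol j, one_mul]

theorem stmt_9 (N : ℕ) (hN : 0 < N) (K : ℕ) (hK : 1 ≤ K)
    (P : Matrix (Fin N) (Fin N) ℝ) (hsymm : P.IsSymm) (hnonneg : ∀ i j, 0 ≤ P i j)
    (hrow : ∀ i, ∑ j, P i j = 1) (hcol : ∀ j, ∑ i, P i j = 1)
    (lam : ℝ) (hlam0 : 0 ≤ lam) (hlam1 : lam < 1)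
    (heig : ∀ (μ : ℝ) (v : Fin N → ℝ), v ≠ 0 → P.mulVec v = μ • v →
      (∑ i, v i) = 0 → |μ| ≤ lam)
    (G : ℝ) (α : ℕ → ℝ) (hα : ∀ k, 0 < α k)
    (x g : ℕ → EuclideanSpace ℝ (Fin N))
    (hg : ∀ k, ‖g k‖ ≤ G)
    (hrec : ∀ k, 1 ≤ k →
      x (k + 1) = (WithLp.equiv 2 (Fin N → ℝ)).symm
        (P.mulVec (WithLp.equiv 2 (Fin N → ℝ) (x k))) - α k • g k)
    (hinit : ∀ i j, x 1 i = x 1 j) :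
    ∀ k, 1 ≤ k →
      ‖x k - ((WithLp.equiv 2 (Fin N → ℝ)).symm fun _ => (∑ j, x k j) / N)‖ ≤
        G * ∑ s ∈ Finset.Icc 1 (k - 1), α s * lam ^ (k - 1 - s) := by
  have hG : 0 ≤ G := le_trans (norm_nonneg _) (hg 0)
  have hcontr := contraction N P hsymm hcol lam hlam0 heig
  have key : ∀ k, 1 ≤ k → ‖x k - avgE N (x k)‖ ≤
      G * ∑ s ∈ Finset.Icc 1 (k - 1), α s * lam ^ (k - 1 - s) := by
    intro k hk
    induction k, hk using Nat.le_induction with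
    | base =>
      have hx1 : avgE N (x 1) = x 1 := by
        ext i
        rw [avgE_apply]
        have : ∑ j, x 1 j = N * x 1 i := by
          rw [Finset.sum_congr rfl fun j _ => hinit j i]
          simp [Finset.sum_const, mul_comm]
        rw [this]
        field_simp
      rw [hx1, sub_self, norm_zero]
      rw [show (1:ℕ) - 1 = 0 from rfl, Finset.Icc_eq_empty (by omega), Finset.sum_empty,
        mul_zero]
    | succ k hk ih =>
      obtain ⟨m, rfl⟩ : ∃ m, k = m + 1 := ⟨k - 1, by omega⟩
      -- recursion for the disagreement vector
      have hPx : (WithLp.equiv 2 (Fin N → ℝ)).symm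
          (P.mulVec (WithLp.equiv 2 (Fin N → ℝ) (x (m+1)))) =
          Matrix.toEuclideanLin P (x (m+1)) := (Matrix.toEuclideanLin_apply P (x (m+1))).symm
      have havg : avgE N (x (m+1+1)) = avgE N (x (m+1)) - α (m+1) • avgE N (g (m+1)) := by
        rw [hrec (m+1) hk, hPx, avgE_sub_smul]
        congr 1
        ext i
        simp only [avgE_apply, sum_toEuclideanLin N P hcol]
      have hy : x (m+1+1) - avgE N (x (m+1+1)) =
          Matrix.toEuclideanLin P (x (m+1) - avgE N (x (m+1)))
            - α (m+1) • (g (m+1) - avgE N (g (m+1))) := by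
        rw [havg, hrec (m+1) hk, hPx, map_sub, toEuclideanLin_avgE N P hrow, smul_sub]
        abel
      -- sum of disagreement vector is zero
      have hzero : ∑ i, (x (m+1) - avgE N (x (m+1))) i = 0 := by
        have : ∀ i, (x (m+1) - avgE N (x (m+1))) i = x (m+1) i - avgE N (x (m+1)) i :=
          fun i => rfl
        simp only [this, Finset.sum_sub_distrib, sum_avgE N hN, sub_self]
      have hnorm1 : ‖Matrix.toEuclideanLin P (x (m+1) - avgE N (x (m+1)))‖ ≤
          lam * ‖x (m+1) - avgE N (x (m+1))‖ := hcontr _ hzero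
      have hnorm2 : ‖α (m+1) • (g (m+1) - avgE N (g (m+1)))‖ ≤ α (m+1) * G := by
        rw [norm_smul, Real.norm_eq_abs, abs_of_pos (hα (m+1))]
        exact mul_le_mul_of_nonneg_left
          (le_trans (norm_sub_avgE N hN _) (hg (m+1))) (hα (m+1)).le
      -- index arithmetic
      have hidx : ∑ s ∈ Finset.Icc 1 (m+1+1-1), α s * lam ^ (m+1+1-1-s) =
          lam * (∑ s ∈ Finset.Icc 1 (m+1-1), α s * lam ^ (m+1-1-s)) + α (m+1) := by
        have h1 : (m+1+1-1 : ℕ) = m + 1 := rfl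
        have h2 : (m+1-1 : ℕ) = m := rfl
        rw [h1, h2, Finset.sum_Icc_succ_top (by omega : 1 ≤ m + 1)]
        rw [Nat.sub_self, pow_zero, mul_one, Finset.mul_sum]
        congr 1
        apply Finset.sum_congr rfl
        intro s hs
        have hs' : s ≤ m := (Finset.mem_Icc.mp hs).2
        have : m + 1 - s = (m - s) + 1 := by omega
        rw [this, pow_succ]
        ring
      calc ‖x (m+1+1) - avgE N (x (m+1+1))‖
          ≤ ‖Matrix.toEuclideanLin P (x (m+1) - avgE N (x (m+1)))‖ +
            ‖α (m+1) • (g (m+1) - avgE N (g (m+1)))‖ := by rw [hy]; exact norm_sub_le _ _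
        _ ≤ lam * ‖x (m+1) - avgE N (x (m+1))‖ + α (m+1) * G :=
            add_le_add hnorm1 hnorm2
        _ ≤ lam * (G * ∑ s ∈ Finset.Icc 1 (m+1-1), α s * lam ^ (m+1-1-s)) + α (m+1) * G :=
            add_le_add_left (mul_le_mul_of_nonneg_left ih hlam0) _
        _ = G * ∑ s ∈ Finset.Icc 1 (m+1+1-1), α s * lam ^ (m+1+1-1-s) := by
            rw [hidx]; ring
  intro k hk
  exact key k hk
end

section
/- Let X ⊆ ℝ^d be a nonempty closed convex set, let μ > 0, C > 0, and let f_1, …, f_K be differentiable functions on ℝ^d that are μ-strongly convex, meaning f_k(y) ≥ f_k(x) + ∇f_k(x)ᵀ(y − x) + (μ/2)‖y − x‖² for all x, y. Suppose x_{k+1} = P_X(x_k − α_k ∇f_k(x_k)) with α_k = 1/(μk) and ‖∇f_k(x_k)‖ ≤ C for all k. Then for every x* ∈ X, ∑_{k=1}^K f_k(x_k) − ∑_{k=1}^K f_k(x*) ≤ (C²/(2μ))(1 + ln K). -/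
lemma tel_aux (b : ℕ → ℝ) (K : ℕ) :
    ∑ k ∈ Finset.Icc 1 K, (b k - b (k + 1)) = b 1 - b (K + 1) := by
  induction K with
  | zero => simp
  | succ n ih => rw [Finset.sum_Icc_succ_top (by omega), ih]; ring

lemma harm_aux (K : ℕ) (hK : 1 ≤ K) :
    ∑ k ∈ Finset.Icc 1 K, (1 / (k : ℝ)) ≤ 1 + Real.log K := by
  induction K with
  | zero => omega
  | succ n ih =>
    rcases Nat.eq_or_lt_of_le hK with h | h
    · simp [← h]
    · have hn : 1 ≤ n := by omega
      have ihn := ih hn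
      have hnpos : (0 : ℝ) < n := by positivity
      have hn1pos : (0 : ℝ) < (n : ℝ) + 1 := by positivity
      have hdivpos : (0 : ℝ) < (n : ℝ) / ((n : ℝ) + 1) := by positivity
      have h1 := Real.log_le_sub_one_of_pos hdivpos
      rw [Real.log_div (ne_of_gt hnpos) (ne_of_gt hn1pos)] at h1
      have h2 : (n : ℝ) / ((n : ℝ) + 1) - 1 = -(1 / ((n : ℝ) + 1)) := by
        field_simp; ring
      rw [h2] at h1
      rw [Finset.sum_Icc_succ_top (by omega)]
      push_cast
      linarith

set_option maxHeartbeats 1000000 in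
theorem stmt_11 (d K : ℕ) (hK : 1 ≤ K)
    (X : Set (EuclideanSpace ℝ (Fin d))) (hXne : X.Nonempty) (hXcl : IsClosed X)
    (hXconv : Convex ℝ X)
    (μ C : ℝ) (hμ : 0 < μ) (hC : 0 < C)
    (f : ℕ → EuclideanSpace ℝ (Fin d) → ℝ)
    (g : ℕ → EuclideanSpace ℝ (Fin d) → EuclideanSpace ℝ (Fin d))
    (hgrad : ∀ k y, HasGradientAt (f k) (g k y) y)
    (hsc : ∀ k y z, f k y + inner ℝ (g k y) (z - y) + μ / 2 * ‖z - y‖ ^ 2 ≤ f k z)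
    (x : ℕ → EuclideanSpace ℝ (Fin d))
    (hmem : ∀ k ∈ Finset.Icc 1 K, x k ∈ X)
    (hgb : ∀ k ∈ Finset.Icc 1 K, ‖g k (x k)‖ ≤ C)
    (hproj : ∀ k ∈ Finset.Icc 1 K, x (k + 1) ∈ X ∧
      ∀ y ∈ X, ‖x (k + 1) - (x k - (1 / (μ * k)) • g k (x k))‖ ≤
        ‖y - (x k - (1 / (μ * k)) • g k (x k))‖) :
    ∀ xs ∈ X,
      ∑ k ∈ Finset.Icc 1 K, f k (x k) - ∑ k ∈ Finset.Icc 1 K, f k xs ≤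
        C ^ 2 / (2 * μ) * (1 + Real.log K) := by
  intro xs hxs
  set b : ℕ → ℝ := fun k => μ / 2 * ((k : ℝ) - 1) * ‖x k - xs‖ ^ 2 with hb
  have key : ∀ k ∈ Finset.Icc 1 K,
      f k (x k) - f k xs ≤ (b k - b (k + 1)) + C ^ 2 / (2 * μ) * (1 / (k : ℝ)) := by
    intro k hk
    have hk1 : 1 ≤ k := (Finset.mem_Icc.mp hk).1
    have hkpos : (0 : ℝ) < (k : ℝ) := by exact_mod_cast Nat.pos_of_ne_zero (by omega)
    obtain ⟨hpX, hmin⟩ := hproj k hk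
    set α : ℝ := 1 / (μ * (k:ℝ)) with hα
    have hαpos : 0 < α := by positivity
    set G := g k (x k) with hG
    set z := x k - α • G with hz
    set p := x (k + 1) with hp
    -- obtuse angle property
    have hbdd : BddBelow (Set.range fun w : X => ‖z - (w : EuclideanSpace ℝ (Fin d))‖) := by
      refine ⟨0, ?_⟩
      rintro _ ⟨w, rfl⟩
      exact norm_nonneg _
    have hinf : ‖z - p‖ = ⨅ w : X, ‖z - (w : EuclideanSpace ℝ (Fin d))‖ := by
      apply le_antisymm
      · haveI : Nonempty X := hXne.to_subtype
        apply le_ciInf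
        intro w
        rw [norm_sub_rev, norm_sub_rev z]
        exact hmin w w.2
      · exact ciInf_le hbdd ⟨p, hpX⟩
    have hobt : (inner ℝ (z - p) (xs - p) : ℝ) ≤ 0 :=
      ((norm_eq_iInf_iff_real_inner_le_zero hXconv hpX).mp hinf) xs hxs
    -- ‖p - xs‖² ≤ ‖z - xs‖²
    have hexp : ‖z - xs‖ ^ 2 = ‖z - p‖ ^ 2 + 2 * (inner ℝ (z - p) (p - xs) : ℝ) + ‖p - xs‖ ^ 2 := by
      have : z - xs = (z - p) + (p - xs) := by abel
      rw [this, norm_add_sq_real]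
    have hflip : (inner ℝ (z - p) (p - xs) : ℝ) = -(inner ℝ (z - p) (xs - p) : ℝ) := by
      rw [← inner_neg_right]; congr 1; abel
    have hcontr : ‖p - xs‖ ^ 2 ≤ ‖z - xs‖ ^ 2 := by
      nlinarith [sq_nonneg ‖z - p‖]
    -- expand ‖z - xs‖²
    set i : ℝ := inner ℝ G (x k - xs) with hi
    have hzxs : ‖z - xs‖ ^ 2 = ‖x k - xs‖ ^ 2 - 2 * α * i + α ^ 2 * ‖G‖ ^ 2 := by
      have h1 : z - xs = (x k - xs) - α • G := by rw [hz]; abel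
      rw [h1, norm_sub_sq_real, real_inner_smul_right, real_inner_comm,
        norm_smul, Real.norm_eq_abs, abs_of_pos hαpos]
      rw [hi]; ring
    -- strong convexity
    have hscon : f k (x k) - f k xs ≤ i - μ / 2 * ‖x k - xs‖ ^ 2 := by
      have h := hsc k (x k) xs
      have h1 : xs - x k = -(x k - xs) := by abel
      rw [h1, inner_neg_right, norm_neg] at h
      rw [hi]
      linarith
    -- gradient bound
    have hgb' : ‖G‖ ^ 2 ≤ C ^ 2 := by
      have := hgb k hk
      nlinarith [norm_nonneg G]
    -- combine
    have hkey2 : i ≤ (‖x k - xs‖ ^ 2 - ‖p - xs‖ ^ 2) / (2 * α) + α / 2 * C ^ 2 := by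
      have h2 : ‖p - xs‖ ^ 2 ≤ ‖x k - xs‖ ^ 2 - 2 * α * i + α ^ 2 * C ^ 2 := by
        nlinarith [sq_nonneg α]
      rw [← sub_nonneg]
      have h3 : (‖x k - xs‖ ^ 2 - ‖p - xs‖ ^ 2) / (2 * α) + α / 2 * C ^ 2 - i =
          (‖x k - xs‖ ^ 2 - ‖p - xs‖ ^ 2 - 2 * α * i + α ^ 2 * C ^ 2) / (2 * α) := by
        field_simp; ring
      rw [h3]
      apply div_nonneg (by linarith) (by positivity)
    have hαval : 1 / (2 * α) = μ * k / 2 := by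
      rw [hα]; field_simp
    have hb1 : b k = μ / 2 * ((k : ℝ) - 1) * ‖x k - xs‖ ^ 2 := rfl
    have hb2 : b (k + 1) = μ / 2 * (k : ℝ) * ‖p - xs‖ ^ 2 := by
      rw [hb]; push_cast; ring
    have hαC : α / 2 * C ^ 2 = C ^ 2 / (2 * μ) * (1 / (k : ℝ)) := by
      rw [hα]; field_simp
    have hdiv : (‖x k - xs‖ ^ 2 - ‖p - xs‖ ^ 2) / (2 * α) =
        μ * k / 2 * (‖x k - xs‖ ^ 2 - ‖p - xs‖ ^ 2) := by
      rw [div_eq_mul_inv, ← one_div, hαval]; ring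
    rw [hb1, hb2]
    rw [hdiv, hαC] at hkey2
    nlinarith [hscon, hkey2]
  have hsum : ∑ k ∈ Finset.Icc 1 K, (f k (x k) - f k xs) ≤
      ∑ k ∈ Finset.Icc 1 K, ((b k - b (k + 1)) + C ^ 2 / (2 * μ) * (1 / (k : ℝ))) :=
    Finset.sum_le_sum key
  rw [Finset.sum_add_distrib, tel_aux, ← Finset.mul_sum] at hsum
  have hb1 : b 1 = 0 := by simp [hb]
  have hbK : 0 ≤ b (K + 1) := by
    have h1 : b (K + 1) = μ / 2 * (K : ℝ) * ‖x (K + 1) - xs‖ ^ 2 := by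
      rw [hb]; push_cast; ring
    rw [h1]; positivity
  have hharm := harm_aux K hK
  have hcoef : (0 : ℝ) ≤ C ^ 2 / (2 * μ) := by positivity
  rw [← Finset.sum_sub_distrib]
  calc ∑ k ∈ Finset.Icc 1 K, (f k (x k) - f k xs)
      ≤ b 1 - b (K + 1) + C ^ 2 / (2 * μ) * ∑ k ∈ Finset.Icc 1 K, (1 / (k : ℝ)) := hsum
    _ ≤ C ^ 2 / (2 * μ) * (1 + Real.log K) := by
        rw [hb1]
        nlinarith [mul_le_mul_of_nonneg_left hharm hcoef]
end

section
/- Let X ⊆ ℝ^d be a nonempty closed convex set with ‖x − y‖ ≤ D' for all x, y ∈ X (Euclidean norm), let C > 0, and let convex differentiable f_1, …, f_K with comparator points x*_1, …, x*_K ∈ X satisfying ∑_{k=1}^{K-1} ‖x*_k − x*_{k+1}‖ ≤ P_K. Suppose x_{k+1} = P_X(x_k − α∇f_k(x_k)) with ‖∇f_k(x_k)‖ ≤ C for all k and α = √(D'(D' + 3P_K))/(C√K). Then ∑_{k=1}^K f_k(x_k) − ∑_{k=1}^K f_k(x*_k) ≤ C√(K·D'(D' + 3P_K)). -/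
open scoped RealInnerProductSpace

-- first-order condition for convex differentiable functions
lemma aux_grad_ineq {E : Type*} [NormedAddCommGroup E] [InnerProductSpace ℝ E] [CompleteSpace E]
    {f : E → ℝ} {gx : E} {x y : E} (hconv : ConvexOn ℝ Set.univ f)
    (hg : HasGradientAt f gx x) : ⟪gx, y - x⟫ ≤ f y - f x := by
  have hline : HasDerivAt (fun t : ℝ => t • (y - x) + x) (y - x) 0 := by
    simpa using ((hasDerivAt_id (0:ℝ)).smul_const (y - x)).add_const x
  have hF : HasFDerivAt f (InnerProductSpace.toDual ℝ E gx) x :=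
    (hasGradientAt_iff_hasFDerivAt).mp hg
  have hφ : HasDerivAt (fun t : ℝ => f (t • (y - x) + x)) ⟪gx, y - x⟫ 0 := by
    have hF0 : HasFDerivAt f (InnerProductSpace.toDual ℝ E gx)
        ((fun t : ℝ => t • (y - x) + x) 0) := by simpa using hF
    have := hF0.comp_hasDerivAt 0 hline
    simpa [Function.comp_def, InnerProductSpace.toDual_apply_apply] using this
  have hφconv : ConvexOn ℝ Set.univ (fun t : ℝ => f (t • (y - x) + x)) := by
    have : ConvexOn ℝ ((AffineMap.lineMap x y : ℝ →ᵃ[ℝ] E) ⁻¹' Set.univ)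
        (f ∘ (AffineMap.lineMap x y : ℝ →ᵃ[ℝ] E)) := hconv.comp_affineMap _
    simpa [Set.preimage_univ, Function.comp_def, AffineMap.lineMap_apply, vsub_eq_sub, vadd_eq_add] using this
  have hslope := hφconv.le_slope_of_hasDerivWithinAt (Set.mem_univ (0:ℝ))
    (Set.mem_univ (1:ℝ)) one_pos (hφ.hasDerivWithinAt)
  rw [slope_def_field] at hslope
  simpa using hslope

-- nonexpansiveness of the projection characterized by minimality
lemma aux_proj_nonexp {E : Type*} [NormedAddCommGroup E] [InnerProductSpace ℝ E]
    {X : Set E} (hXconv : Convex ℝ X) {p z y : E} (hp : p ∈ X) (hy : y ∈ X)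
    (hmin : ∀ w ∈ X, ‖p - z‖ ≤ ‖w - z‖) : ‖p - y‖ ≤ ‖z - y‖ := by
  have hne : Nonempty X := ⟨⟨p, hp⟩⟩
  have heq : ‖z - p‖ = ⨅ w : X, ‖z - w‖ := by
    apply le_antisymm
    · refine le_ciInf fun w => ?_
      rw [norm_sub_rev z p, norm_sub_rev z (w : E)]
      exact hmin w w.2
    · exact ciInf_le ⟨0, by rintro r ⟨w, rfl⟩; exact norm_nonneg _⟩ (⟨p, hp⟩ : X)
  have hobtuse : ⟪z - p, y - p⟫ ≤ 0 :=
    ((norm_eq_iInf_iff_real_inner_le_zero hXconv hp).mp heq) y hy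
  have hsq : ‖p - y‖ ^ 2 ≤ ‖z - y‖ ^ 2 := by
    have hiden : ‖z - y‖ ^ 2 = ‖z - p‖ ^ 2 + 2 * ⟪z - p, p - y⟫ + ‖p - y‖ ^ 2 := by
      have : z - y = (z - p) + (p - y) := by abel
      rw [this, ← real_inner_self_eq_norm_sq, ← real_inner_self_eq_norm_sq,
        ← real_inner_self_eq_norm_sq, inner_add_add_self,
        real_inner_comm (p - y) (z - p)]
      ring
    have h2 : 0 ≤ ⟪z - p, p - y⟫ := by
      have : ⟪z - p, p - y⟫ = - ⟪z - p, y - p⟫ := by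
        rw [← inner_neg_right]; congr 1; abel
      linarith [hobtuse, this]
    nlinarith [sq_nonneg ‖z - p‖]
  nlinarith [hsq, norm_nonneg (p - y), norm_nonneg (z - y)]

-- telescoping identity
lemma aux_tele (a b : ℕ → ℝ) : ∀ K, 1 ≤ K →
    ∑ k ∈ Finset.Icc 1 K, (a k - b k)
      = a 1 - b K + ∑ k ∈ Finset.Icc 1 (K - 1), (a (k + 1) - b k) := by
  intro K
  induction K with
  | zero => omega
  | succ n ih =>
    intro _
    rcases Nat.eq_zero_or_pos n with h | h
    · subst h; simp
    · have hn : 1 ≤ n := h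
      rw [Finset.sum_Icc_succ_top (by omega : 1 ≤ n + 1), ih hn]
      have : n + 1 - 1 = (n - 1) + 1 := by omega
      rw [this, Finset.sum_Icc_succ_top (by omega : 1 ≤ n - 1 + 1)]
      have h2 : n - 1 + 1 = n := by omega
      rw [h2]
      ring

theorem stmt_12 (d K : ℕ) (hK : 1 ≤ K)
    (X : Set (EuclideanSpace ℝ (Fin d))) (hXne : X.Nonempty) (hXcl : IsClosed X)
    (hXconv : Convex ℝ X)
    (D' C PK : ℝ) (hD' : 0 < D') (hC : 0 < C)
    (hdiam : ∀ x ∈ X, ∀ y ∈ X, ‖x - y‖ ≤ D')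
    (f : ℕ → EuclideanSpace ℝ (Fin d) → ℝ)
    (g : ℕ → EuclideanSpace ℝ (Fin d) → EuclideanSpace ℝ (Fin d))
    (hconv : ∀ k, ConvexOn ℝ Set.univ (f k))
    (hgrad : ∀ k y, HasGradientAt (f k) (g k y) y)
    (x xs : ℕ → EuclideanSpace ℝ (Fin d))
    (hmem : ∀ k ∈ Finset.Icc 1 K, x k ∈ X)
    (hmemxs : ∀ k ∈ Finset.Icc 1 K, xs k ∈ X)
    (hpath : ∑ k ∈ Finset.Icc 1 (K - 1), ‖xs k - xs (k + 1)‖ ≤ PK)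
    (hgb : ∀ k ∈ Finset.Icc 1 K, ‖g k (x k)‖ ≤ C)
    (α : ℝ) (hstep : α = Real.sqrt (D' * (D' + 3 * PK)) / (C * Real.sqrt K))
    (hproj : ∀ k ∈ Finset.Icc 1 K, x (k + 1) ∈ X ∧
      ∀ y ∈ X, ‖x (k + 1) - (x k - α • g k (x k))‖ ≤ ‖y - (x k - α • g k (x k))‖) :
    ∑ k ∈ Finset.Icc 1 K, f k (x k) - ∑ k ∈ Finset.Icc 1 K, f k (xs k) ≤
      C * Real.sqrt (K * (D' * (D' + 3 * PK))) := by
  -- basic positivity facts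
  have hPK : 0 ≤ PK := le_trans (Finset.sum_nonneg fun _ _ => norm_nonneg _) hpath
  have hQ : 0 < D' * (D' + 3 * PK) := by positivity
  have hKpos : (0:ℝ) < K := by exact_mod_cast hK
  have hsK : 0 < Real.sqrt K := Real.sqrt_pos.mpr hKpos
  have hsQ : 0 < Real.sqrt (D' * (D' + 3 * PK)) := Real.sqrt_pos.mpr hQ
  have hα : 0 < α := by rw [hstep]; positivity
  -- abbreviations
  set a : ℕ → ℝ := fun k => ‖x k - xs k‖ ^ 2 with ha
  set b : ℕ → ℝ := fun k => ‖x (k + 1) - xs k‖ ^ 2 with hb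
  -- per-step inequality
  have hstep_ineq : ∀ k ∈ Finset.Icc 1 K,
      f k (x k) - f k (xs k) ≤ (a k - b k) / (2 * α) + α * C ^ 2 / 2 := by
    intro k hk
    have hxk := hmem k hk
    have hxsk := hmemxs k hk
    have hpk := hproj k hk
    set G := g k (x k) with hG
    have h1 : f k (x k) - f k (xs k) ≤ ⟪G, x k - xs k⟫ := by
      have := aux_grad_ineq (y := xs k) (hconv k) (hgrad k (x k))
      have hsym : ⟪G, xs k - x k⟫ = - ⟪G, x k - xs k⟫ := by
        rw [← inner_neg_right]; congr 1; abel
      linarith [this, hsym.symm.le]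
    have h2 : b k ≤ a k - 2 * α * ⟪G, x k - xs k⟫ + α ^ 2 * ‖G‖ ^ 2 := by
      have hne : ‖x (k + 1) - xs k‖ ≤ ‖(x k - α • G) - xs k‖ := by
        have := aux_proj_nonexp hXconv hpk.1 hxsk hpk.2
        simpa using this
      have hsq : b k ≤ ‖(x k - α • G) - xs k‖ ^ 2 := by
        have := pow_le_pow_left₀ (norm_nonneg _) hne 2
        simpa [hb] using this
      have hexp : ‖(x k - α • G) - xs k‖ ^ 2
          = a k - 2 * α * ⟪G, x k - xs k⟫ + α ^ 2 * ‖G‖ ^ 2 := by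
        have : (x k - α • G) - xs k = (x k - xs k) - α • G := by abel
        rw [this, ← real_inner_self_eq_norm_sq, inner_sub_sub_self,
          real_inner_smul_left, real_inner_smul_right, real_inner_smul_left,
          real_inner_smul_right, real_inner_self_eq_norm_sq,
          real_inner_self_eq_norm_sq, real_inner_comm]
        ring
      linarith
    have hGb : ‖G‖ ^ 2 ≤ C ^ 2 :=
      pow_le_pow_left₀ (norm_nonneg _) (hgb k hk) 2
    have h3 : ⟪G, x k - xs k⟫ ≤ (a k - b k) / (2 * α) + α * C ^ 2 / 2 := by
      have key : 2 * α * ⟪G, x k - xs k⟫ ≤ (a k - b k) + α ^ 2 * C ^ 2 := by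
        nlinarith [mul_le_mul_of_nonneg_left hGb (sq_nonneg α)]
      calc ⟪G, x k - xs k⟫ = (2 * α * ⟪G, x k - xs k⟫) / (2 * α) := by
            field_simp
        _ ≤ ((a k - b k) + α ^ 2 * C ^ 2) / (2 * α) := by
            gcongr
        _ = (a k - b k) / (2 * α) + α * C ^ 2 / 2 := by field_simp
    linarith
  -- telescoping bound
  have hteleb : ∑ k ∈ Finset.Icc 1 K, (a k - b k) ≤ D' ^ 2 + 3 * D' * PK := by
    rw [aux_tele a b K hK]
    have ha1 : a 1 ≤ D' ^ 2 := by
      have := hdiam (x 1) (hmem 1 (by simp [hK])) (xs 1) (hmemxs 1 (by simp [hK]))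
      have := pow_le_pow_left₀ (norm_nonneg _) this 2
      simpa [ha] using this
    have hbK : 0 ≤ b K := sq_nonneg _
    have hsum : ∑ k ∈ Finset.Icc 1 (K - 1), (a (k + 1) - b k)
        ≤ ∑ k ∈ Finset.Icc 1 (K - 1), 3 * D' * ‖xs k - xs (k + 1)‖ := by
      apply Finset.sum_le_sum
      intro k hk
      simp only [Finset.mem_Icc] at hk
      have hkK : k ∈ Finset.Icc 1 K := by simp only [Finset.mem_Icc]; omega
      have hk1K : k + 1 ∈ Finset.Icc 1 K := by simp only [Finset.mem_Icc]; omega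
      have hxk1 : x (k + 1) ∈ X := (hproj k hkK).1
      have hxsk : xs k ∈ X := hmemxs k hkK
      have hxsk1 : xs (k + 1) ∈ X := hmemxs (k + 1) hk1K
      -- a (k+1) - b k = ‖x(k+1) - xs(k+1)‖² - ‖x(k+1) - xs k‖² ≤ 3D'‖xs k - xs(k+1)‖
      have hd1 : ‖x (k + 1) - xs (k + 1)‖ ≤ D' := hdiam _ hxk1 _ hxsk1
      have hd2 : ‖x (k + 1) - xs k‖ ≤ D' := hdiam _ hxk1 _ hxsk
      have hiden : a (k + 1) = b k
          + 2 * ⟪x (k + 1) - xs k, xs k - xs (k + 1)⟫ + ‖xs k - xs (k + 1)‖ ^ 2 := by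
        have hsplit : x (k + 1) - xs (k + 1)
            = (x (k + 1) - xs k) + (xs k - xs (k + 1)) := by abel
        simp only [ha, hb]
        rw [hsplit, ← real_inner_self_eq_norm_sq, ← real_inner_self_eq_norm_sq,
          ← real_inner_self_eq_norm_sq, inner_add_add_self,
          real_inner_comm (xs k - xs (k + 1)) (x (k + 1) - xs k)]
        ring
      have hcs : ⟪x (k + 1) - xs k, xs k - xs (k + 1)⟫
          ≤ ‖x (k + 1) - xs k‖ * ‖xs k - xs (k + 1)‖ := real_inner_le_norm _ _
      have hd3 : ‖xs k - xs (k + 1)‖ ≤ D' := hdiam _ hxsk _ hxsk1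
      have hnn : 0 ≤ ‖xs k - xs (k + 1)‖ := norm_nonneg _
      nlinarith [hiden, hcs, hd1, hd2, hd3, hnn,
        mul_le_mul_of_nonneg_right hd2 hnn, mul_le_mul_of_nonneg_right hd3 hnn]
    have hsum2 : ∑ k ∈ Finset.Icc 1 (K - 1), 3 * D' * ‖xs k - xs (k + 1)‖
        = 3 * D' * ∑ k ∈ Finset.Icc 1 (K - 1), ‖xs k - xs (k + 1)‖ := by
      rw [Finset.mul_sum]
    nlinarith [hsum, hsum2 ▸ hsum, mul_le_mul_of_nonneg_left hpath (by positivity : (0:ℝ) ≤ 3 * D')]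
  -- combine
  have hmain : ∑ k ∈ Finset.Icc 1 K, f k (x k) - ∑ k ∈ Finset.Icc 1 K, f k (xs k)
      ≤ (D' ^ 2 + 3 * D' * PK) / (2 * α) + K * (α * C ^ 2 / 2) := by
    rw [← Finset.sum_sub_distrib]
    calc ∑ k ∈ Finset.Icc 1 K, (f k (x k) - f k (xs k))
        ≤ ∑ k ∈ Finset.Icc 1 K, ((a k - b k) / (2 * α) + α * C ^ 2 / 2) :=
          Finset.sum_le_sum hstep_ineq
      _ = (∑ k ∈ Finset.Icc 1 K, (a k - b k)) / (2 * α) + K * (α * C ^ 2 / 2) := by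
          rw [Finset.sum_add_distrib, ← Finset.sum_div, Finset.sum_const]
          simp [Nat.card_Icc]
      _ ≤ (D' ^ 2 + 3 * D' * PK) / (2 * α) + K * (α * C ^ 2 / 2) := by
          gcongr
  -- final arithmetic
  have hfin : (D' ^ 2 + 3 * D' * PK) / (2 * α) + K * (α * C ^ 2 / 2)
      = C * Real.sqrt (K * (D' * (D' + 3 * PK))) := by
    have hQsq : Real.sqrt (D' * (D' + 3 * PK)) ^ 2 = D' * (D' + 3 * PK) :=
      Real.sq_sqrt hQ.le
    have hKsq : Real.sqrt K ^ 2 = (K : ℝ) := Real.sq_sqrt hKpos.le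
    set S := Real.sqrt (D' * (D' + 3 * PK)) with hS
    set s := Real.sqrt K with hs
    clear_value S s
    have hDQ : D' ^ 2 + 3 * D' * PK = S ^ 2 := by rw [hQsq]; ring
    rw [Real.sqrt_mul hKpos.le, ← hS, ← hs, hstep, hDQ, ← hKsq]
    field_simp
    ring
  linarith [hmain, hfin.le]
end

section
/- Let f, r: ℝ^N → ℝ be differentiable, and suppose there exist G > 0 and R > 0 such that for all x, y with f(x) ≥ f(y): f(x) − f(y) ≤ G·∇f(x)ᵀ(x − y)/‖∇f(x)‖ (taking ∇f(x)/‖∇f(x)‖ = 0 when ∇f(x) = 0), and similarly r(x) − r(y) ≤ R·∇r(x)ᵀ(x − y)/‖∇r(x)‖. Fix â > 0 and b > 0 with R ≤ b·â, and let ζ = max{G, b}. Then for all x, y with f(x) ≥ f(y) and r(x) ≥ r(y), (f + r)(x) − (f + r)(y) ≤ ζ·(∇f(x)/‖∇f(x)‖ + â·∇r(x)/‖∇r(x)‖)ᵀ(x − y). -/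
theorem stmt_13 (N : ℕ)
    (f r : EuclideanSpace ℝ (Fin N) → ℝ)
    (gf gr : EuclideanSpace ℝ (Fin N) → EuclideanSpace ℝ (Fin N))
    (hgf : ∀ x, HasGradientAt f (gf x) x) (hgr : ∀ x, HasGradientAt r (gr x) x)
    (G R : ℝ) (hG : 0 < G) (hR : 0 < R)
    (hf : ∀ x y, f y ≤ f x → f x - f y ≤ G * (inner ℝ (gf x) (x - y) / ‖gf x‖))
    (hr : ∀ x y, r y ≤ r x → r x - r y ≤ R * (inner ℝ (gr x) (x - y) / ‖gr x‖))
    (ahat b : ℝ) (hahat : 0 < ahat) (hb : 0 < b) (hRba : R ≤ b * ahat) :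
    ∀ x y, f y ≤ f x → r y ≤ r x →
      (f x + r x) - (f y + r y) ≤
        max G b *
          (inner ℝ ((‖gf x‖)⁻¹ • gf x + ahat • (‖gr x‖)⁻¹ • gr x) (x - y) : ℝ) := by
  intro x y hfxy hrxy
  set A : ℝ := inner ℝ (gf x) (x - y) / ‖gf x‖ with hA
  set B : ℝ := inner ℝ (gr x) (x - y) / ‖gr x‖ with hB
  have hGA : f x - f y ≤ G * A := hf x y hfxy
  have hRB : r x - r y ≤ R * B := hr x y hrxy
  have hA0 : 0 ≤ A := nonneg_of_mul_nonneg_right (le_trans (by linarith) hGA) hG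
  have hB0 : 0 ≤ B := nonneg_of_mul_nonneg_right (le_trans (by linarith) hRB) hR
  have hinner : (inner ℝ ((‖gf x‖)⁻¹ • gf x + ahat • (‖gr x‖)⁻¹ • gr x) (x - y) : ℝ)
      = A + ahat * B := by
    rw [inner_add_left, real_inner_smul_left, real_inner_smul_left, real_inner_smul_left]
    rw [hA, hB]
    ring
  rw [hinner]
  have h1 : G * A ≤ max G b * A := mul_le_mul_of_nonneg_right (le_max_left G b) hA0
  have h2 : R * B ≤ max G b * (ahat * B) := by
    rw [← mul_assoc]
    exact mul_le_mul_of_nonneg_right (le_trans hRba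
      (mul_le_mul_of_nonneg_right (le_max_right G b) hahat.le)) hB0
  calc (f x + r x) - (f y + r y) ≤ G * A + R * B := by linarith
    _ ≤ max G b * A + max G b * (ahat * B) := add_le_add h1 h2
    _ = max G b * (A + ahat * B) := by ring
end

section
/- Let X ⊆ ℝ^N, let F: X → ℝ, let σ ∈ ℝ^N, let h > 0, let e_i be the i-th standard basis vector, and let ρ, β ≥ 0. Suppose x ∈ X satisfies F(x) − σᵀx ≤ inf_{y∈X} (F(y) − σᵀy) + (ρ + β‖σ‖₁), and x' ∈ X satisfies F(x') − (σ + h e_i)ᵀx' ≤ inf_{y∈X} (F(y) − (σ + h e_i)ᵀy) + (ρ + β‖σ + h e_i‖₁), where all coordinates of σ are nonnegative. Then x'_i ≥ x_i − 2(ρ + β‖σ‖₁)/h − β. -/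
theorem stmt_16 (N : ℕ) (X : Set (Fin N → ℝ)) (hXne : X.Nonempty)
    (F : (Fin N → ℝ) → ℝ) (σ : Fin N → ℝ) (hσ : ∀ i, 0 ≤ σ i)
    (h : ℝ) (hh : 0 < h) (i : Fin N) (ρ β : ℝ) (hρ : 0 ≤ ρ) (hβ : 0 ≤ β)
    (x x' : Fin N → ℝ) (hx : x ∈ X) (hx' : x' ∈ X)
    (hor : ∀ y ∈ X,
      F x - dotProduct σ x ≤
        F y - dotProduct σ y + (ρ + β * ∑ j, |σ j|))
    (hor' : ∀ y ∈ X,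
      F x' - dotProduct (σ + h • (Pi.single i 1 : Fin N → ℝ)) x' ≤
        F y - dotProduct (σ + h • (Pi.single i 1 : Fin N → ℝ)) y +
          (ρ + β * ∑ j, |(σ + h • (Pi.single i 1 : Fin N → ℝ)) j|)) :
    x i - 2 * (ρ + β * ∑ j, |σ j|) / h - β ≤ x' i := by
  have h1 := hor x' hx'
  have h2 := hor' x hx
  have hsum : (∑ j, |(σ + h • (Pi.single i 1 : Fin N → ℝ)) j|)
      = (∑ j, |σ j|) + h := by
    have heq : ∀ j, |(σ + h • (Pi.single i 1 : Fin N → ℝ)) j|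
        = |σ j| + h * (Pi.single i 1 : Fin N → ℝ) j := by
      intro j
      rcases eq_or_ne j i with rfl | hji
      · simp [abs_of_nonneg, hσ j, add_nonneg (hσ j) hh.le, hh.le]
      · simp [Pi.single_eq_of_ne hji]
    simp only [heq, Finset.sum_add_distrib, ← Finset.mul_sum]
    have : (∑ j, (Pi.single i 1 : Fin N → ℝ) j) = 1 := by
      simp [Finset.sum_pi_single]
    rw [this]; ring
  have hdp : ∀ y : Fin N → ℝ,
      dotProduct (σ + h • (Pi.single i 1 : Fin N → ℝ)) y
        = dotProduct σ y + h * y i := by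
    intro y
    rw [add_dotProduct, smul_dotProduct, single_dotProduct]
    simp [smul_eq_mul]
  rw [hsum, hdp, hdp] at h2
  have key : x i - x' i - β ≤ 2 * (ρ + β * ∑ j, |σ j|) / h := by
    rw [le_div_iff₀ hh]; nlinarith [h1, h2]
  linarith
end
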